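/- arXiv:2303.00058 — 3 statements merged into one kernel-verified Lean document; each statement's English description precedes it below -/
import Mathlib

section
/- Suppose (A, x) lies in the full-column-rank, full-measure set U_{r,s} and T = supp q(A,x). Then the map x ↦ q(A,x) is differentiable at x, with Jacobian given row-wise by: the rows indexed by T form the matrix (A_{:,T})†, and the rows indexed outside T are zero. -/
open Matrix

lemma aux_stat (c d δ : ℝ) (hδ : 0 < δ) (hd : 0 ≤ d)
    (h : ∀ t : ℝ, |t| ≤ δ → 0 ≤ -2*t*c + t^2*d) : c = 0 := by
  by_contra hc
  have hc' : 0 < |c| := abs_pos.mpr hc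
  have hd1 : (0:ℝ) < d + 1 := by linarith
  set t0 := min δ (|c|/(d+1)) with ht0
  have ht0pos : 0 < t0 := lt_min hδ (div_pos hc' hd1)
  have h1 := h t0 (by rw [abs_of_pos ht0pos]; exact min_le_left _ _)
  have h2 := h (-t0) (by rw [abs_neg, abs_of_pos ht0pos]; exact min_le_left _ _)
  have key : 2*t0*|c| ≤ t0^2*d := by
    rcases abs_cases c with ⟨h3, _⟩ | ⟨h3, _⟩
    · rw [h3]; nlinarith
    · rw [h3]; nlinarith
  have h5 : t0 * (2*|c|) ≤ t0*(t0*d) := by nlinarith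
  have h6 : 2*|c| ≤ t0*d := le_of_mul_le_mul_left h5 ht0pos
  have ht0le : t0 ≤ |c|/(d+1) := min_le_right _ _
  have h7 : t0 * d ≤ |c| := by
    calc t0*d ≤ (|c|/(d+1))*d := by nlinarith
    _ ≤ |c| := by rw [div_mul_eq_mul_div, div_le_iff₀ hd1]; nlinarith
  linarith

lemma aux_mulVec_inj {r s : ℕ} (A : Matrix (Fin r) (Fin s) ℝ) (h : A.rank = s) :
    Function.Injective A.mulVec := by
  have hker : LinearMap.ker A.mulVecLin = ⊥ := by
    have h3 := LinearMap.finrank_range_add_finrank_ker A.mulVecLin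
    rw [Matrix.rank] at h
    rw [h, Module.finrank_fintype_fun_eq_card, Fintype.card_fin] at h3
    have h0 : Module.finrank ℝ (LinearMap.ker A.mulVecLin) = 0 := by omega
    exact Submodule.finrank_eq_zero.mp h0
  intro u u' huv
  exact LinearMap.ker_eq_bot.mp hker huv

lemma aux_gram_unit {r : ℕ} {m : Type*} [Fintype m] [DecidableEq m] (B : Matrix (Fin r) m ℝ)
    (hB : Function.Injective B.mulVec) : IsUnit (Bᵀ * B) := by
  rw [← Matrix.mulVec_injective_iff_isUnit]
  have hker : ∀ w, (Bᵀ*B).mulVec w = 0 → w = 0 := by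
    intro w hw
    have h1 : B.mulVec w ⬝ᵥ B.mulVec w = 0 := by
      have h0 : w ⬝ᵥ (Bᵀ*B).mulVec w = 0 := by rw [hw]; simp
      rw [← Matrix.mulVec_mulVec, Matrix.dotProduct_mulVec, Matrix.vecMul_transpose] at h0
      exact h0
    have h2 : B.mulVec w = 0 := dotProduct_self_eq_zero.mp h1
    exact hB (h2.trans (Matrix.mulVec_zero B).symm)
  intro u u' h
  have := hker (u - u') (by rw [Matrix.mulVec_sub, h, sub_self])
  exact sub_eq_zero.mp this


/-- Moore–Penrose pseudoinverse of a full-column-rank real matrix. -/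
noncomputable def pinv {m n : Type*} [Fintype m] [Fintype n] [DecidableEq n]
    (A : Matrix m n ℝ) : Matrix n m ℝ := (Aᵀ * A)⁻¹ * Aᵀ

/-- `v` is the nonnegative least squares solution for `A`, `x`. -/
def IsNNLS {r s : ℕ} (A : Matrix (Fin r) (Fin s) ℝ) (x : Fin r → ℝ) (v : Fin s → ℝ) : Prop :=
  (∀ j, 0 ≤ v j) ∧
    ∀ w : Fin s → ℝ, (∀ j, 0 ≤ w j) →
      ∑ i, (x i - A.mulVec v i) ^ 2 ≤ ∑ i, (x i - A.mulVec w i) ^ 2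

/-- at a locally-constant-support pair `(A, x)`, the map `x ↦ q(A,x)` is
differentiable with Jacobian having rows in `T` equal to `(A_{:,T})†` and zero rows
outside `T`. -/
theorem nnls_deriv_in_x {r s : ℕ} (hrs : s ≤ r)
    (Q : (Fin r → Fin s → ℝ) → (Fin r → ℝ) → (Fin s → ℝ))
    (hQ : ∀ A x, (∀ i j, 0 ≤ A i j) → (∀ i, 0 ≤ x i) → (Matrix.of A).rank = s →
      IsNNLS (Matrix.of A) x (Q A x))
    (A : Matrix (Fin r) (Fin s) ℝ) (hA0 : ∀ i j, 0 ≤ A i j) (hArank : A.rank = s)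
    (x : Fin r → ℝ) (hx0 : ∀ i, 0 ≤ x i)
    -- `(A, x)` lies in `U_{r,s}`: the support of `q` is constant on a neighborhood
    (hU : ∃ N : Set ((Fin r → Fin s → ℝ) × (Fin r → ℝ)), IsOpen N ∧
      ((fun i j => A i j), x) ∈ N ∧
      ∀ p ∈ N, (∀ i j, 0 ≤ p.1 i j) → (∀ i, 0 ≤ p.2 i) → (Matrix.of p.1).rank = s →
        {j | 0 < Q p.1 p.2 j} = {j | 0 < Q (fun i j => A i j) x j})
    (T : Finset (Fin s))
    (hT : T = Finset.univ.filter (fun j => 0 < Q (fun i j => A i j) x j))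
    (J : Matrix (Fin s) (Fin r) ℝ)
    (hJ : ∀ j i, J j i =
      if hj : j ∈ T then
        pinv (A.submatrix id (Subtype.val : {j // j ∈ T} → Fin s)) ⟨j, hj⟩ i
      else 0) :
    HasFDerivWithinAt (fun y => Q (fun i j => A i j) y)
      (Matrix.mulVecLin J).toContinuousLinearMap {y : Fin r → ℝ | ∀ i, 0 ≤ y i} x := by
  obtain ⟨N, hNopen, hNmem, hNsupp⟩ := hU
  set A' : Fin r → Fin s → ℝ := fun i j => A i j with hA'
  have hofA : (Matrix.of A' : Matrix (Fin r) (Fin s) ℝ) = A := rfl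
  set S : Set (Fin r → ℝ) := {y | ∀ i, 0 ≤ y i} with hS
  set V : Set (Fin r → ℝ) := {y | (A', y) ∈ N} with hV
  have hVopen : IsOpen V := hNopen.preimage (Continuous.prodMk_right A')
  have hxV : x ∈ V := hNmem
  set B := A.submatrix id (Subtype.val : {j // j ∈ T} → Fin s) with hB
  have hAinj := aux_mulVec_inj A hArank
  have hext : ∀ (u : {j // j ∈ T} → ℝ),
      A.mulVec (fun j => if hj : j ∈ T then u ⟨j, hj⟩ else 0) = B.mulVec u := by
    intro u
    funext i
    show (∑ j, A i j * (if hj : j ∈ T then u ⟨j, hj⟩ else 0))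
      = ∑ t : {j // j ∈ T}, A i t.val * u t
    rw [← Finset.sum_subset (Finset.subset_univ T)
      (by intro j _ hj; rw [dif_neg hj, mul_zero])]
    rw [← Finset.sum_coe_sort T (fun j => A i j * (if hj : j ∈ T then u ⟨j, hj⟩ else 0))]
    apply Finset.sum_congr rfl
    intro t _
    rw [dif_pos t.2]
  have hBinj : Function.Injective B.mulVec := by
    intro u u' h
    have h1 : A.mulVec (fun j => if hj : j ∈ T then u ⟨j, hj⟩ else 0)
        = A.mulVec (fun j => if hj : j ∈ T then u' ⟨j, hj⟩ else 0) := by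
      rw [hext, hext, h]
    have h2 := hAinj h1
    funext t
    have := congrFun h2 t.val
    rwa [dif_pos t.2, dif_pos t.2] at this
  have hGunit : IsUnit (Bᵀ * B) := aux_gram_unit B hBinj
  have hGdet : IsUnit (Bᵀ * B).det := (Matrix.isUnit_iff_isUnit_det _).mp hGunit
  have hGinv : (Bᵀ * B)⁻¹ * (Bᵀ * B) = 1 := Matrix.nonsing_inv_mul _ hGdet
  have key : ∀ y, y ∈ V → y ∈ S → Q A' y = J.mulVec y := by
    intro y hyV hyS
    have hr' : (Matrix.of A').rank = s := by rw [hofA]; exact hArank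
    have hnnls : IsNNLS A y (Q A' y) := by
      have := hQ A' y hA0 hyS hr'; rwa [hofA] at this
    set v := Q A' y with hv
    have hsupp : {j | 0 < v j} = {j | 0 < Q A' x j} := hNsupp (A', y) hyV hA0 hyS hr'
    have hmemT : ∀ j, j ∈ T ↔ 0 < v j := by
      intro j
      rw [hT, Finset.mem_filter]
      constructor
      · rintro ⟨-, hj⟩; exact (Set.ext_iff.mp hsupp j).mpr hj
      · intro hj; exact ⟨Finset.mem_univ j, (Set.ext_iff.mp hsupp j).mp hj⟩
    have hv0 : ∀ j, j ∉ T → v j = 0 := by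
      intro j hj
      exact le_antisymm (not_lt.mp (fun h => hj ((hmemT j).mpr h))) (hnnls.1 j)
    have hstat : ∀ j ∈ T, (∑ i, A i j * (y i - A.mulVec v i)) = 0 := by
      intro j hjT
      have hvj : 0 < v j := (hmemT j).mp hjT
      apply aux_stat _ (∑ i, (A i j)^2) (v j) hvj
        (Finset.sum_nonneg fun i _ => sq_nonneg _)
      intro t ht
      set w : Fin s → ℝ := fun j' => v j' + (if j' = j then t else 0) with hw
      have hw0 : ∀ j', 0 ≤ w j' := by
        intro j'
        by_cases hjj : j' = j
        · subst hjj
          show 0 ≤ v j' + if j' = j' then t else 0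
          rw [if_pos rfl]
          have := abs_le.mp ht
          linarith
        · simp only [hw, if_neg hjj, add_zero]; exact hnnls.1 j'
      have hle := hnnls.2 w hw0
      have hmw : ∀ i, A.mulVec w i = A.mulVec v i + t * A i j := by
        intro i
        show (∑ j', A i j' * w j') = (∑ j', A i j' * v j') + t * A i j
        have hterm : ∀ j', A i j' * w j'
            = A i j' * v j' + (if j' = j then A i j' * t else 0) := by
          intro j'
          by_cases hjj : j' = j <;> simp [hw, hjj, mul_add]
        rw [Finset.sum_congr rfl (fun j' _ => hterm j'), Finset.sum_add_distrib,
          Finset.sum_ite_eq' Finset.univ j (fun j' => A i j' * t)]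
        simp [mul_comm]
      have hexp : (∑ i, (y i - A.mulVec w i)^2)
          = (∑ i, (y i - A.mulVec v i)^2)
            + (-2*t*(∑ i, A i j * (y i - A.mulVec v i)) + t^2*(∑ i, (A i j)^2)) := by
        have hterm : ∀ i, (y i - A.mulVec w i)^2
            = (y i - A.mulVec v i)^2
              + (-2*t*(A i j * (y i - A.mulVec v i)) + t^2*(A i j)^2) := by
          intro i; rw [hmw i]; ring
        rw [Finset.sum_congr rfl (fun i _ => hterm i), Finset.sum_add_distrib,
          Finset.sum_add_distrib, ← Finset.mul_sum, ← Finset.mul_sum]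
      linarith
    set z := A.mulVec v with hz
    set u : {j // j ∈ T} → ℝ := fun t => v t.val with hu
    have hBu : B.mulVec u = z := by
      have heq : (fun j => if hj : j ∈ T then u ⟨j, hj⟩ else 0) = v := by
        funext j
        by_cases hj : j ∈ T
        · rw [dif_pos hj]
        · rw [dif_neg hj, hv0 j hj]
      rw [← hext u, heq, hz]
    have hnormal : (Bᵀ * B).mulVec u = Bᵀ.mulVec y := by
      rw [← Matrix.mulVec_mulVec, hBu]
      funext t
      show (∑ i, Bᵀ t i * z i) = ∑ i, Bᵀ t i * y i
      have hBt : ∀ i, Bᵀ t i = A i t.val := fun i => rfl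
      have h0 := hstat t.val t.2
      have h2 : (∑ i, A i t.val * y i) - (∑ i, A i t.val * z i) = 0 := by
        rw [← Finset.sum_sub_distrib, ← h0]
        apply Finset.sum_congr rfl
        intro i _; ring
      simp only [hBt]
      linarith
    have husol : u = (pinv B).mulVec y := by
      have h3 := congrArg (fun w => ((Bᵀ * B)⁻¹).mulVec w) hnormal
      simp only [Matrix.mulVec_mulVec] at h3
      rw [hGinv, Matrix.one_mulVec] at h3
      rw [h3]
      rfl
    funext j
    by_cases hj : j ∈ T
    · have hJy : (J.mulVec y) j = ((pinv B).mulVec y) ⟨j, hj⟩ := by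
        show (∑ i, J j i * y i) = ∑ i, pinv B ⟨j, hj⟩ i * y i
        apply Finset.sum_congr rfl
        intro i _
        rw [hJ j i, dif_pos hj]
      rw [hJy, ← husol]
    · have hJy : (J.mulVec y) j = 0 := by
        show (∑ i, J j i * y i) = 0
        apply Finset.sum_eq_zero
        intro i _
        rw [hJ j i, dif_neg hj, zero_mul]
      rw [hJy]
      exact hv0 j hj
  have hxS : x ∈ S := hx0
  have hmemN : V ∩ S ∈ nhdsWithin x S :=
    Filter.inter_mem (mem_nhdsWithin_of_mem_nhds (hVopen.mem_nhds hxV)) self_mem_nhdsWithin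
  have heq : (fun y => Q A' y) =ᶠ[nhdsWithin x S] (fun y => J.mulVec y) :=
    Filter.eventuallyEq_of_mem hmemN (fun y hy => key y hy.1 hy.2)
  have hlin : HasFDerivWithinAt (fun y => J.mulVec y)
      (Matrix.mulVecLin J).toContinuousLinearMap S x :=
    (Matrix.mulVecLin J).toContinuousLinearMap.hasFDerivWithinAt
  exact hlin.congr_of_eventuallyEq heq (key x hxV hxS)
end

section
/- Let F ∈ ℝ^{r×s} have full column rank and x ∈ ℝ^r. Then the derivative of the map F ↦ F† x with respect to the i-th row of F is the s×s matrix −(F†)_{:,i} (F† x)ᵀ + ((I − F F†) x)_i · F† (F†)ᵀ. -/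
open Matrix

section Aux

attribute [local instance] Matrix.linftyOpNormedRing Matrix.linftyOpNormedAlgebra

variable {s : ℕ}

/-- package a bilinear map on finite-dimensional spaces as a continuous bilinear map -/
noncomputable def bilinCLM {E F G : Type*}
    [NormedAddCommGroup E] [NormedSpace ℝ E] [FiniteDimensional ℝ E]
    [NormedAddCommGroup F] [NormedSpace ℝ F] [FiniteDimensional ℝ F]
    [NormedAddCommGroup G] [NormedSpace ℝ G]
    (B : E →ₗ[ℝ] F →ₗ[ℝ] G) : E →L[ℝ] F →L[ℝ] G :=
  LinearMap.toContinuousLinearMap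
    ((LinearMap.toContinuousLinearMap :
        (F →ₗ[ℝ] G) ≃ₗ[ℝ] (F →L[ℝ] G)).toLinearMap ∘ₗ B)

@[simp] theorem bilinCLM_apply {E F G : Type*}
    [NormedAddCommGroup E] [NormedSpace ℝ E] [FiniteDimensional ℝ E]
    [NormedAddCommGroup F] [NormedSpace ℝ F] [FiniteDimensional ℝ F]
    [NormedAddCommGroup G] [NormedSpace ℝ G]
    (B : E →ₗ[ℝ] F →ₗ[ℝ] G) (e : E) (f : F) : bilinCLM B e f = B e f := rfl

/-- outer product as a bilinear map -/
noncomputable def outerL : (Fin s → ℝ) →ₗ[ℝ] (Fin s → ℝ) →ₗ[ℝ] Matrix (Fin s) (Fin s) ℝ where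
  toFun a :=
    { toFun := fun b => vecMulVec a b
      map_add' := by intro b c; ext α β; simp [vecMulVec_apply]; ring
      map_smul' := by intro m b; ext α β; simp [vecMulVec_apply]; ring }
  map_add' := by intro a b; ext c α β; simp [vecMulVec_apply]; ring
  map_smul' := by intro m a; ext c α β; simp [vecMulVec_apply]

/-- matrix-vector multiplication as a bilinear map -/
noncomputable def mulVecL : Matrix (Fin s) (Fin s) ℝ →ₗ[ℝ] (Fin s → ℝ) →ₗ[ℝ] (Fin s → ℝ) where
  toFun A := A.mulVecLin
  map_add' := by intro A B; ext v β; simp [Matrix.add_mulVec]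
  map_smul' := by intro m A; ext v β; simp [Matrix.smul_mulVec]

noncomputable def BoutCLM (s : ℕ) :
    (Fin s → ℝ) →L[ℝ] (Fin s → ℝ) →L[ℝ] Matrix (Fin s) (Fin s) ℝ := bilinCLM outerL

@[simp] theorem BoutCLM_apply {s : ℕ} (a b : Fin s → ℝ) :
    BoutCLM s a b = vecMulVec a b := rfl

noncomputable def BmvCLM (s : ℕ) :
    Matrix (Fin s) (Fin s) ℝ →L[ℝ] (Fin s → ℝ) →L[ℝ] (Fin s → ℝ) := bilinCLM mulVecL

@[simp] theorem BmvCLM_apply {s : ℕ} (A : Matrix (Fin s) (Fin s) ℝ) (v : Fin s → ℝ) :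
    BmvCLM s A v = A *ᵥ v := rfl

theorem pinv_mulVec_deriv_row' {r : ℕ} (F : Matrix (Fin r) (Fin s) ℝ)
    (hF : F.rank = s) (x : Fin r → ℝ) (i : Fin r)
    (M : Matrix (Fin s) (Fin s) ℝ)
    (hM : ∀ β α, M β α =
      -(pinv F β i * (pinv F).mulVec x α) +
        (x i - (F * pinv F).mulVec x i) * (pinv F * (pinv F)ᵀ) β α) :
    HasFDerivAt
      (fun a : Fin s → ℝ =>
        (pinv (Matrix.of fun i' j => if i' = i then a j else F i' j)).mulVec x)
      (Matrix.mulVecLin M).toContinuousLinearMap (F i) := by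
  classical
  -- invertibility of FᵀF
  have hUnit : IsUnit (Fᵀ * F) := by
    rw [← Matrix.mulVec_surjective_iff_isUnit]
    have hrank : (Fᵀ * F).rank = s := by rw [Matrix.rank_transpose_mul_self]; exact hF
    have htop : LinearMap.range (Fᵀ * F).mulVecLin = ⊤ := by
      apply Submodule.eq_top_of_finrank_eq
      rw [← Matrix.rank, hrank]
      simp
    intro y
    have : y ∈ LinearMap.range (Fᵀ * F).mulVecLin := htop ▸ Submodule.mem_top
    obtain ⟨z, hz⟩ := this
    exact ⟨z, hz⟩
  set u : (Matrix (Fin s) (Fin s) ℝ)ˣ := hUnit.unit with hu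
  have huval : (u : Matrix (Fin s) (Fin s) ℝ) = Fᵀ * F := hUnit.unit_spec
  have huinv : ((u⁻¹ : (Matrix (Fin s) (Fin s) ℝ)ˣ) : Matrix (Fin s) (Fin s) ℝ)
      = (Fᵀ * F)⁻¹ := by
    rw [Matrix.nonsing_inv_eq_ringInverse, ← huval, Ring.inverse_unit]
  set Q : Matrix (Fin s) (Fin s) ℝ := (Fᵀ * F)⁻¹ with hQdef
  set a₀ : Fin s → ℝ := F i with ha₀
  -- the row-i-zeroed matrix
  set F' : Matrix (Fin r) (Fin s) ℝ :=
    Matrix.of (fun i' j => if i' = i then 0 else F i' j) with hF'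
  set K : Matrix (Fin s) (Fin s) ℝ := F'ᵀ * F' with hK
  set w : Fin s → ℝ := F'ᵀ *ᵥ x with hw
  have split : ∀ (f : Fin r → ℝ), ∑ k, f k = (∑ k ∈ Finset.univ \ {i}, f k) + f i :=
    fun f => Finset.sum_eq_sum_sdiff_singleton_add (Finset.mem_univ i) f
  have hGt : ∀ a : Fin s → ℝ,
      (Matrix.of fun i' j => if i' = i then a j else F i' j)ᵀ *
        (Matrix.of fun i' j => if i' = i then a j else F i' j) = K + vecMulVec a a := by
    intro a
    ext α β
    simp only [Matrix.mul_apply, Matrix.transpose_apply, Matrix.add_apply, vecMulVec_apply,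
      hK, hF', Matrix.of_apply]
    rw [split, split]
    have h1 : ∀ k ∈ Finset.univ \ {i},
        (if k = i then a α else F k α) * (if k = i then a β else F k β)
          = (if k = i then 0 else F k α) * (if k = i then 0 else F k β) := by
      intro k hk
      have : k ≠ i := by simpa using (Finset.mem_sdiff.mp hk).2
      simp [this]
    rw [Finset.sum_congr rfl h1]
    simp
  have hGv : ∀ a : Fin s → ℝ,
      (Matrix.of fun i' j => if i' = i then a j else F i' j)ᵀ *ᵥ x = w + x i • a := by
    intro a
    funext α
    simp only [Matrix.mulVec, dotProduct, Matrix.transpose_apply, Pi.add_apply, Pi.smul_apply,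
      smul_eq_mul, hw, hF', Matrix.of_apply]
    rw [split, split]
    have h1 : ∀ k ∈ Finset.univ \ {i},
        (if k = i then a α else F k α) * x k = (if k = i then 0 else F k α) * x k := by
      intro k hk
      have : k ≠ i := by simpa using (Finset.mem_sdiff.mp hk).2
      simp [this]
    rw [Finset.sum_congr rfl h1]
    simp
    ring
  have hGa0 : (Matrix.of fun i' j => if i' = i then a₀ j else F i' j) = F := by
    ext i' j
    by_cases h : i' = i <;> simp [h, ha₀]
  have ha0G : K + vecMulVec a₀ a₀ = Fᵀ * F := by
    rw [← hGt a₀, hGa0]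
  have hc2 : w + x i • a₀ = Fᵀ *ᵥ x := by
    rw [← hGv a₀, hGa0]
  have hdet : IsUnit (Fᵀ * F).det := (Matrix.isUnit_iff_isUnit_det _).mp hUnit
  have hQmul : Q * (Fᵀ * F) = 1 := Matrix.nonsing_inv_mul _ hdet
  have hRinv : Ring.inverse (K + vecMulVec a₀ a₀) = Q := by
    rw [ha0G, ← Matrix.nonsing_inv_eq_ringInverse]
  -- function rewriting
  have hfun : (fun a : Fin s → ℝ =>
      (pinv (Matrix.of fun i' j => if i' = i then a j else F i' j)).mulVec x)
      = fun a => Ring.inverse (K + vecMulVec a a) *ᵥ (w + x i • a) := by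
    funext a
    rw [pinv, ← Matrix.mulVec_mulVec, hGt, hGv, Matrix.nonsing_inv_eq_ringInverse]
  -- derivative chain
  have hpair : HasFDerivAt (fun a : Fin s → ℝ => (a, a))
      ((ContinuousLinearMap.id ℝ (Fin s → ℝ)).prod (ContinuousLinearMap.id ℝ (Fin s → ℝ))) a₀ :=
    (hasFDerivAt_id a₀).prodMk (hasFDerivAt_id a₀)
  have hsq : HasFDerivAt (fun a : Fin s → ℝ => vecMulVec a a)
      (((BoutCLM s).isBoundedBilinearMap.deriv (a₀, a₀)).comp
        ((ContinuousLinearMap.id ℝ (Fin s → ℝ)).prod (ContinuousLinearMap.id ℝ (Fin s → ℝ))))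
      a₀ := by
    exact HasFDerivAt.comp (f := fun a : Fin s → ℝ => (a, a)) a₀
      ((BoutCLM s).isBoundedBilinearMap.hasFDerivAt (a₀, a₀)) hpair
  have hN : HasFDerivAt (fun a : Fin s → ℝ => K + vecMulVec a a)
      (((BoutCLM s).isBoundedBilinearMap.deriv (a₀, a₀)).comp
        ((ContinuousLinearMap.id ℝ (Fin s → ℝ)).prod (ContinuousLinearMap.id ℝ (Fin s → ℝ))))
      a₀ := hsq.const_add K
  have hinvR := hasFDerivAt_ringInverse (𝕜 := ℝ) u
  rw [huval, ← ha0G] at hinvR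
  have hinv : HasFDerivAt (fun a : Fin s → ℝ => Ring.inverse (K + vecMulVec a a))
      ((-ContinuousLinearMap.mulLeftRight ℝ _ ↑u⁻¹ ↑u⁻¹).comp
        (((BoutCLM s).isBoundedBilinearMap.deriv (a₀, a₀)).comp
          ((ContinuousLinearMap.id ℝ (Fin s → ℝ)).prod (ContinuousLinearMap.id ℝ (Fin s → ℝ)))))
      a₀ := by exact HasFDerivAt.comp (g := Ring.inverse) a₀ hinvR hN
  have hv : HasFDerivAt (fun a : Fin s → ℝ => w + x i • a)
      (x i • ContinuousLinearMap.id ℝ (Fin s → ℝ)) a₀ :=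
    ((hasFDerivAt_id a₀).const_smul (x i)).const_add w
  have hP := ((BmvCLM s).isBoundedBilinearMap.hasFDerivAt
      (Ring.inverse (K + vecMulVec a₀ a₀), w + x i • a₀)).comp a₀ (hinv.prodMk hv)
  rw [hfun]
  refine hP.congr_fderiv ?_
  -- now prove equality of the derivatives
  have hvmv : ∀ (a b y : Fin s → ℝ), vecMulVec a b *ᵥ y = (b ⬝ᵥ y) • a := by
    intro a b y
    funext α
    simp only [vecMulVec_apply, Matrix.mulVec, dotProduct, Pi.smul_apply, smul_eq_mul]
    rw [Finset.sum_congr rfl fun k _ => mul_assoc (a α) (b k) (y k), ← Finset.mul_sum, mul_comm]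
  set p : Fin s → ℝ := Q *ᵥ (Fᵀ *ᵥ x) with hpdef
  have hp : pinv F *ᵥ x = p := by
    rw [pinv, ← Matrix.mulVec_mulVec]
  have hcol : ∀ β, pinv F β i = (Q *ᵥ a₀) β := by
    intro β
    simp [pinv, Matrix.mul_apply, Matrix.mulVec, dotProduct, ha₀]
    rfl
  have hQQ : pinv F * (pinv F)ᵀ = Q := by
    rw [pinv, Matrix.transpose_mul, Matrix.transpose_transpose,
      Matrix.transpose_nonsing_inv]
    have hsymm : (Fᵀ * F)ᵀ = Fᵀ * F := by
      rw [Matrix.transpose_mul, Matrix.transpose_transpose]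
    rw [hsymm]
    calc Q * Fᵀ * (F * Q) = Q * (Fᵀ * F) * Q := by
          rw [Matrix.mul_assoc, Matrix.mul_assoc, Matrix.mul_assoc]
      _ = Q := by rw [hQmul, Matrix.one_mul]
  have hFp : ((F * pinv F) *ᵥ x) i = a₀ ⬝ᵥ p := by
    rw [← Matrix.mulVec_mulVec, hp]
    rfl
  refine ContinuousLinearMap.ext fun h => funext fun β => ?_
  simp only [ContinuousLinearMap.coe_comp', Function.comp_apply,
    IsBoundedBilinearMap.deriv_apply, ContinuousLinearMap.prod_apply,
    ContinuousLinearMap.coe_smul', Pi.smul_apply, ContinuousLinearMap.coe_id', id_eq,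
    ContinuousLinearMap.neg_apply, ContinuousLinearMap.mulLeftRight_apply,
    BoutCLM_apply, BmvCLM_apply, hRinv, hc2, huinv,
    LinearMap.coe_toContinuousLinearMap, Matrix.mulVecLin_apply]
  show (Q *ᵥ (x i • h) + (-(Q * (vecMulVec a₀ h + vecMulVec h a₀) * Q)) *ᵥ (Fᵀ *ᵥ x)) β = _
  rw [Matrix.neg_mulVec, Matrix.mul_add, Matrix.add_mul, Matrix.mul_assoc, Matrix.mul_assoc,
    Matrix.add_mulVec, ← Matrix.mulVec_mulVec, ← Matrix.mulVec_mulVec,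
    ← Matrix.mulVec_mulVec, ← Matrix.mulVec_mulVec, hvmv, hvmv, ← hpdef,
    Matrix.mulVec_smul, Matrix.mulVec_smul]
  have hRHS : (M *ᵥ h) β
      = -(pinv F β i * (p ⬝ᵥ h)) + (x i - a₀ ⬝ᵥ p) * (Q *ᵥ h) β := by
    have expand : ∀ α, M β α * h α
        = -(pinv F β i * (p α * h α)) + (x i - a₀ ⬝ᵥ p) * (Q β α * h α) := by
      intro α
      rw [hM β α, hp, ← hFp, hQQ]
      ring
    calc (M *ᵥ h) β = ∑ α, M β α * h α := rfl
      _ = ∑ α, (-(pinv F β i * (p α * h α)) + (x i - a₀ ⬝ᵥ p) * (Q β α * h α)) :=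
          Finset.sum_congr rfl fun α _ => expand α
      _ = -(pinv F β i * (p ⬝ᵥ h)) + (x i - a₀ ⬝ᵥ p) * (Q *ᵥ h) β := by
          rw [Finset.sum_add_distrib]
          simp only [dotProduct, Matrix.mulVec, Finset.mul_sum, Finset.sum_neg_distrib]
  have hgoalR : (LinearMap.toContinuousLinearMap M.mulVecLin) h β = (M *ᵥ h) β := rfl
  rw [hgoalR, hRHS]
  simp only [Matrix.mulVec_smul, Pi.add_apply, Pi.neg_apply, Pi.smul_apply, smul_eq_mul]
  rw [hcol β, dotProduct_comm p h]
  ring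


end Aux

/-- for `F` of full column rank, the derivative of `F ↦ F† x` with
respect to the `i`-th row of `F` is `−(F†)_{:,i}(F†x)ᵀ + ((I − FF†)x)_i · F†(F†)ᵀ`. -/
theorem pinv_mulVec_deriv_row {r s : ℕ} (hrs : s ≤ r) (F : Matrix (Fin r) (Fin s) ℝ)
    (hF : F.rank = s) (x : Fin r → ℝ) (i : Fin r)
    (M : Matrix (Fin s) (Fin s) ℝ)
    (hM : ∀ β α, M β α =
      -(pinv F β i * (pinv F).mulVec x α) +
        (x i - (F * pinv F).mulVec x i) * (pinv F * (pinv F)ᵀ) β α) :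
    HasFDerivAt
      (fun a : Fin s → ℝ =>
        (pinv (Matrix.of fun i' j => if i' = i then a j else F i' j)).mulVec x)
      (Matrix.mulVecLin M).toContinuousLinearMap (F i) :=
  pinv_mulVec_deriv_row' F hF x i M hM
end

section
/- Suppose (Aᵏ, xᵏ) → (A, x) within the set of pairs where the matrix has full column rank and all entries are nonnegative, and suppose the support of q(Aᵏ, xᵏ) is the same set T₁ for all k while supp q(A,x) = T₀ ≠ T₁. Then T₀ ⊊ T₁, and for every index i ∈ T₁ \ T₀ the corresponding entry of A_{:,T₁}† x is zero. -/
open Matrix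

section Aux

open Filter Finset

variable {r s : ℕ}

private lemma quad_expand {n : Type*} [Fintype n] (B : Matrix (Fin r) n ℝ)
    (y : Fin r → ℝ) (v u : n → ℝ) (t : ℝ) :
    ∑ i, (y i - B.mulVec (v + t • u) i) ^ 2 =
      ∑ i, (y i - B.mulVec v i) ^ 2
        - 2 * t * ∑ i, (y i - B.mulVec v i) * B.mulVec u i
        + t ^ 2 * ∑ i, (B.mulVec u i) ^ 2 := by
  rw [Finset.mul_sum, Finset.mul_sum, ← Finset.sum_sub_distrib, ← Finset.sum_add_distrib]
  refine Finset.sum_congr rfl fun i _ => ?_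
  have h : B.mulVec (v + t • u) i = B.mulVec v i + t * B.mulVec u i := by
    rw [Matrix.mulVec_add, Matrix.mulVec_smul]; rfl
  rw [h]; ring

private lemma inj_of_rank {B : Matrix (Fin r) (Fin s) ℝ} (h : B.rank = s) :
    Function.Injective B.mulVec := by
  have h1 := LinearMap.finrank_range_add_finrank_ker B.mulVecLin
  rw [Matrix.rank] at h
  rw [h] at h1
  have h2 : Module.finrank ℝ (Fin s → ℝ) = s := by simp
  rw [h2] at h1
  have hker : LinearMap.ker B.mulVecLin = ⊥ := by
    apply Submodule.finrank_eq_zero.mp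
    omega
  have hinj : Function.Injective B.mulVecLin := LinearMap.ker_eq_bot.mp hker
  intro a b hab
  exact hinj (by simpa [Matrix.mulVecLin_apply] using hab)

private lemma gram_isUnit {n : Type*} [Fintype n] [DecidableEq n]
    (B : Matrix (Fin r) n ℝ) (hB : Function.Injective B.mulVec) :
    IsUnit (Bᵀ * B).det := by
  rw [← Matrix.isUnit_iff_isUnit_det, ← Matrix.mulVec_injective_iff_isUnit]
  intro u w huw
  have hu : (Bᵀ * B).mulVec (u - w) = 0 := by
    rw [Matrix.mulVec_sub, huw, sub_self]
  have h1 : B.mulVec (u - w) ⬝ᵥ B.mulVec (u - w) = 0 := by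
    have : (u - w) ⬝ᵥ (Bᵀ * B).mulVec (u - w) = 0 := by rw [hu]; simp
    rwa [← Matrix.mulVec_mulVec, Matrix.dotProduct_mulVec, Matrix.vecMul_transpose] at this
  have h2 : B.mulVec (u - w) = 0 := by
    funext i
    exact mul_self_eq_zero.mp <| (Finset.sum_eq_zero_iff_of_nonneg
      (fun i _ => mul_self_nonneg (B.mulVec (u - w) i))).mp h1 i (Finset.mem_univ i)
  have h3 : u - w = 0 := hB (a₂ := 0) (by simpa using h2)
  exact sub_eq_zero.mp h3

private lemma nnls_unique (B : Matrix (Fin r) (Fin s) ℝ) (y : Fin r → ℝ)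
    (hB : Function.Injective B.mulVec) {v w : Fin s → ℝ}
    (hv : IsNNLS B y v) (hw : IsNNLS B y w) : v = w := by
  have hfv := hv.2 w hw.1
  have hfw := hw.2 v hv.1
  have e1 := quad_expand B y v (w - v) 1
  have e2 := quad_expand B y v (w - v) (1/2)
  have hw' : v + (1:ℝ) • (w - v) = w := by funext j; simp
  rw [hw'] at e1
  have hm : ∀ j, 0 ≤ (v + (1/2:ℝ) • (w - v)) j := by
    intro j
    have h1 := hv.1 j; have h2 := hw.1 j
    simp only [Pi.add_apply, Pi.smul_apply, Pi.sub_apply, smul_eq_mul]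
    linarith
  have h3 := hv.2 _ hm
  rw [e2] at h3
  set G := ∑ i, (y i - B.mulVec v i) * B.mulVec (w - v) i with hG
  set C := ∑ i, (B.mulVec (w - v) i) ^ 2 with hCdef
  have hC0 : 0 ≤ C := Finset.sum_nonneg fun i _ => sq_nonneg _
  have heq := le_antisymm hfv hfw
  have hC : C = 0 := by linarith
  have h4 : B.mulVec (w - v) = 0 := by
    funext i
    exact (pow_eq_zero_iff two_ne_zero).mp <| (Finset.sum_eq_zero_iff_of_nonneg
      (fun i _ => sq_nonneg (B.mulVec (w - v) i))).mp hC i (Finset.mem_univ i)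
  have h5 : w - v = 0 := hB (a₂ := 0) (by simpa using h4)
  have := sub_eq_zero.mp h5
  exact this.symm

set_option maxHeartbeats 1000000 in
private lemma kkt (B : Matrix (Fin r) (Fin s) ℝ) (y : Fin r → ℝ) {v : Fin s → ℝ}
    (hv : IsNNLS B y v) {j : Fin s} (hj : 0 < v j) :
    ∑ i, (y i - B.mulVec v i) * B i j = 0 := by
  set g := ∑ i, (y i - B.mulVec v i) * B i j with hg_def
  set c := ∑ i, (B i j) ^ 2 with hc_def
  have hc0 : 0 ≤ c := Finset.sum_nonneg fun i _ => sq_nonneg _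
  by_contra hg
  have hg2 : 0 < g ^ 2 := by positivity
  set ε := min (1 / (c + 1)) (v j / (|g| + 1)) with hε_def
  have habs : 0 < |g| + 1 := by positivity
  have hε0 : 0 < ε := lt_min (by positivity) (by positivity)
  set t := ε * g with ht_def
  have htabs : |t| ≤ v j := by
    rw [ht_def, abs_mul, abs_of_pos hε0]
    calc ε * |g| ≤ (v j / (|g| + 1)) * |g| := by
          apply mul_le_mul_of_nonneg_right (min_le_right _ _) (abs_nonneg g)
      _ ≤ v j := by
          rw [div_mul_eq_mul_div, div_le_iff₀ habs]
          nlinarith [abs_nonneg g, hj]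
  have hfeas : ∀ l, 0 ≤ (v + t • (Pi.single j 1 : Fin s → ℝ)) l := by
    intro l
    by_cases h : l = j
    · subst h
      simp only [Pi.add_apply, Pi.smul_apply, Pi.single_eq_same, smul_eq_mul, mul_one]
      have := neg_abs_le t
      linarith
    · simp only [Pi.add_apply, Pi.smul_apply, Pi.single_eq_of_ne h, smul_eq_mul, mul_zero,
        add_zero]
      exact hv.1 l
  have h2 := hv.2 _ hfeas
  rw [quad_expand] at h2
  have hBu1 : ∑ i, (y i - B.mulVec v i) * B.mulVec ((Pi.single j 1 : Fin s → ℝ)) i = g := by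
    rw [hg_def]
    refine Finset.sum_congr rfl fun i _ => ?_
    simp [Matrix.mulVec_single]
  have hBu2 : ∑ i, (B.mulVec ((Pi.single j 1 : Fin s → ℝ)) i) ^ 2 = c := by
    rw [hc_def]
    refine Finset.sum_congr rfl fun i _ => ?_
    simp [Matrix.mulVec_single]
  rw [hBu1, hBu2] at h2
  -- h2 : F ≤ F - 2 * t * g + t ^ 2 * c, with t = ε * g
  have hεc : ε * c < 2 := by
    have h1 : ε ≤ 1 / (c + 1) := min_le_left _ _
    have : ε * c ≤ (1 / (c + 1)) * c := mul_le_mul_of_nonneg_right h1 hc0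
    have h2' : (1 / (c + 1)) * c < 2 := by
      rw [div_mul_eq_mul_div, one_mul, div_lt_iff₀ (by linarith)]
      nlinarith
    linarith
  have key : 0 ≤ -2 * t * g + t ^ 2 * c := by linarith
  rw [ht_def] at key
  have key2 : 0 ≤ ε * g ^ 2 * (ε * c - 2) := by
    have hr : ε * g ^ 2 * (ε * c - 2) = -2 * (ε * g) * g + (ε * g) ^ 2 * c := by ring
    rw [hr]; exact key
  have hneg : ε * c - 2 < 0 := by linarith
  have := mul_neg_of_pos_of_neg (mul_pos hε0 hg2) hneg
  linarith

private lemma mulVec_ext (B : Matrix (Fin r) (Fin s) ℝ) (T : Finset (Fin s))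
    (u : {j // j ∈ T} → ℝ) :
    B.mulVec (fun j => if h : j ∈ T then u ⟨j, h⟩ else 0) =
      (B.submatrix id (Subtype.val : {j // j ∈ T} → Fin s)).mulVec u := by
  classical
  funext i
  show ∑ j, B i j * _ = ∑ p, B.submatrix id Subtype.val i p * u p
  have h1 : ∑ p : {j // j ∈ T}, B.submatrix id Subtype.val i p * u p
      = ∑ p : {j // j ∈ T},
        (fun j => B i j * if h : j ∈ T then u ⟨j, h⟩ else 0) p.val := by
    refine Finset.sum_congr rfl fun p _ => ?_
    simp only [Matrix.submatrix_apply, id_eq, dif_pos p.2]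
  rw [h1, Finset.sum_coe_sort T (fun j => B i j * if h : j ∈ T then u ⟨j, h⟩ else 0)]
  exact (Finset.sum_subset (Finset.subset_univ T)
    (fun j _ hj => by simp [dif_neg hj])).symm

private lemma inj_submatrix (B : Matrix (Fin r) (Fin s) ℝ)
    (hB : Function.Injective B.mulVec) (T : Finset (Fin s)) :
    Function.Injective (B.submatrix id (Subtype.val : {j // j ∈ T} → Fin s)).mulVec := by
  classical
  intro u w huw
  have h1 : B.mulVec (fun j => if h : j ∈ T then u ⟨j, h⟩ else 0) =
      B.mulVec (fun j => if h : j ∈ T then w ⟨j, h⟩ else 0) := by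
    rw [mulVec_ext, mulVec_ext, huw]
  have h2 := hB h1
  funext p
  have := congrFun h2 p.val
  simpa [dif_pos p.2] using this

private lemma pinv_on_support (B : Matrix (Fin r) (Fin s) ℝ) (y : Fin r → ℝ)
    (hB : Function.Injective B.mulVec) (T : Finset (Fin s)) (v : Fin s → ℝ)
    (hsupp : ∀ j, j ∉ T → v j = 0)
    (hg : ∀ j ∈ T, ∑ i, (y i - B.mulVec v i) * B i j = 0) :
    ∀ p : {j // j ∈ T},
      (pinv (B.submatrix id (Subtype.val : {j // j ∈ T} → Fin s))).mulVec y p = v p.val := by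
  classical
  set C := B.submatrix id (Subtype.val : {j // j ∈ T} → Fin s) with hCdef
  have hext : ∀ u : {j // j ∈ T} → ℝ,
      B.mulVec (fun j => if h : j ∈ T then u ⟨j, h⟩ else 0) = C.mulVec u :=
    fun u => mulVec_ext B T u
  have hC : Function.Injective C.mulVec := inj_submatrix B hB T
  have hM : IsUnit (Cᵀ * C).det := gram_isUnit C hC
  have hCv : C.mulVec (fun p => v p.val) = B.mulVec v := by
    rw [← hext]
    refine congrArg B.mulVec (funext fun j => ?_)
    by_cases h : j ∈ T
    · rw [dif_pos h]
    · rw [dif_neg h, hsupp j h]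
  have hkey : (Cᵀ * C).mulVec (fun p => v p.val) = Cᵀ.mulVec y := by
    rw [← Matrix.mulVec_mulVec, hCv]
    funext p
    show ∑ i, Cᵀ p i * B.mulVec v i = ∑ i, Cᵀ p i * y i
    have h0 := hg p.val p.2
    have : ∑ i, (y i - B.mulVec v i) * B i p.val = 0 := h0
    have hsplit : ∑ i, B i p.val * y i - ∑ i, B i p.val * B.mulVec v i = 0 := by
      rw [← Finset.sum_sub_distrib]
      rw [← this]
      exact Finset.sum_congr rfl fun i _ => by ring
    have : ∑ i, B i p.val * B.mulVec v i = ∑ i, B i p.val * y i := by linarith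
    simpa [Matrix.transpose_apply, hCdef, Matrix.submatrix_apply] using this
  intro p
  have : (pinv C).mulVec y = fun p => v p.val := by
    rw [pinv, ← Matrix.mulVec_mulVec, ← hkey, Matrix.mulVec_mulVec,
      Matrix.nonsing_inv_mul _ hM, Matrix.one_mulVec]
  rw [this]

end Aux

/-- along a convergent sequence of full-column-rank nonnegative pairs with
constant support `T₁` whose limit has support `T₀ ≠ T₁`, one has `T₀ ⊊ T₁`, and the
entries of `A_{:,T₁}† x` at indices of `T₁ \ T₀` vanish. -/
theorem support_limit {r s : ℕ} (hrs : s ≤ r)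
    (Q : (Fin r → Fin s → ℝ) → (Fin r → ℝ) → (Fin s → ℝ))
    (hQ : ∀ B y, (∀ i j, 0 ≤ B i j) → (∀ i, 0 ≤ y i) → (Matrix.of B).rank = s →
      IsNNLS (Matrix.of B) y (Q B y))
    (Ak : ℕ → Fin r → Fin s → ℝ) (xk : ℕ → Fin r → ℝ)
    (A : Fin r → Fin s → ℝ) (x : Fin r → ℝ)
    (hAk0 : ∀ k i j, 0 ≤ Ak k i j) (hAkrank : ∀ k, (Matrix.of (Ak k)).rank = s)
    (hxk0 : ∀ k i, 0 ≤ xk k i)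
    (hA0 : ∀ i j, 0 ≤ A i j) (hArank : (Matrix.of A).rank = s) (hx0 : ∀ i, 0 ≤ x i)
    (hlim : Filter.Tendsto (fun k => (Ak k, xk k)) Filter.atTop (nhds (A, x)))
    (T₀ T₁ : Finset (Fin s))
    (hT₁ : ∀ k, T₁ = Finset.univ.filter (fun j => 0 < Q (Ak k) (xk k) j))
    (hT₀ : T₀ = Finset.univ.filter (fun j => 0 < Q A x j))
    (hne : T₀ ≠ T₁) :
    T₀ ⊂ T₁ ∧ ∀ j (hj : j ∈ T₁), j ∉ T₀ →
      (pinv ((Matrix.of A).submatrix id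
        (Subtype.val : {j // j ∈ T₁} → Fin s))).mulVec x ⟨j, hj⟩ = 0 := by
  classical
  set BT : (Fin r → Fin s → ℝ) → Matrix (Fin r) {j // j ∈ T₁} ℝ :=
    fun C => (Matrix.of C).submatrix id (Subtype.val : {j // j ∈ T₁} → Fin s) with hBT
  set vk : ℕ → Fin s → ℝ := fun k => Q (Ak k) (xk k) with hvk
  have hIs : ∀ k, IsNNLS (Matrix.of (Ak k)) (xk k) (vk k) := fun k =>
    hQ (Ak k) (xk k) (hAk0 k) (hxk0 k) (hAkrank k)
  have hmem : ∀ k j, j ∈ T₁ ↔ 0 < vk k j := by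
    intro k j
    rw [hT₁ k]
    simp [hvk]
  have hsupp0 : ∀ k j, j ∉ T₁ → vk k j = 0 := by
    intro k j hj
    have h1 := (hIs k).1 j
    have h2 : ¬0 < vk k j := fun h => hj ((hmem k j).mpr h)
    linarith [not_lt.mp h2]
  have hg : ∀ k, ∀ j ∈ T₁,
      ∑ i, (xk k i - (Matrix.of (Ak k)).mulVec (vk k) i) * (Matrix.of (Ak k)) i j = 0 :=
    fun k j hj => kkt _ _ (hIs k) ((hmem k j).mp hj)
  have hform : ∀ k (p : {j // j ∈ T₁}),
      (pinv (BT (Ak k))).mulVec (xk k) p = vk k p.val :=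
    fun k => pinv_on_support (Matrix.of (Ak k)) (xk k) (inj_of_rank (hAkrank k)) T₁ (vk k)
      (hsupp0 k) (hg k)
  -- entrywise limits
  have hA_lim : Filter.Tendsto Ak Filter.atTop (nhds A) :=
    (continuous_fst.tendsto (A, x)).comp hlim
  have hx_lim : Filter.Tendsto xk Filter.atTop (nhds x) :=
    (continuous_snd.tendsto (A, x)).comp hlim
  have hAe : ∀ i j, Filter.Tendsto (fun k => Ak k i j) Filter.atTop (nhds (A i j)) :=
    fun i j => tendsto_pi_nhds.mp (tendsto_pi_nhds.mp hA_lim i) j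
  have hxe : ∀ i, Filter.Tendsto (fun k => xk k i) Filter.atTop (nhds (x i)) :=
    fun i => tendsto_pi_nhds.mp hx_lim i
  -- Gram matrices converge
  have hgram_apply : ∀ (C : Fin r → Fin s → ℝ) p q,
      ((BT C)ᵀ * BT C) p q = ∑ i, C i p.val * C i q.val := by
    intro C p q
    simp [Matrix.mul_apply, hBT]
  have hMk : Filter.Tendsto (fun k => (BT (Ak k))ᵀ * BT (Ak k)) Filter.atTop
      (nhds ((BT A)ᵀ * BT A)) := by
    refine tendsto_pi_nhds.mpr ?_
    intro p
    rw [tendsto_pi_nhds]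
    intro q
    simp only [hgram_apply]
    exact tendsto_finset_sum _ fun i _ => (hAe i p.val).mul (hAe i q.val)
  have hMdet : IsUnit ((BT A)ᵀ * BT A).det :=
    gram_isUnit _ (inj_submatrix _ (inj_of_rank hArank) T₁)
  have hinv_cont : Filter.Tendsto (fun k => ((BT (Ak k))ᵀ * BT (Ak k))⁻¹) Filter.atTop
      (nhds (((BT A)ᵀ * BT A)⁻¹)) := by
    have hdet_ne : ((BT A)ᵀ * BT A).det ≠ 0 := hMdet.ne_zero
    have hcont : ContinuousAt Inv.inv ((BT A)ᵀ * BT A) := by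
      apply continuousAt_matrix_inv
      rw [Ring.inverse_eq_inv']
      exact continuousAt_inv₀ hdet_ne
    exact hcont.tendsto.comp hMk
  have hinv_e : ∀ p q, Filter.Tendsto (fun k => ((BT (Ak k))ᵀ * BT (Ak k))⁻¹ p q)
      Filter.atTop (nhds ((((BT A)ᵀ * BT A)⁻¹) p q)) :=
    fun p q => tendsto_pi_nhds.mp (tendsto_pi_nhds.mp hinv_cont p) q
  have hpin : ∀ (C : Fin r → Fin s → ℝ) (y : Fin r → ℝ) (p : {j // j ∈ T₁}),
      (pinv (BT C)).mulVec y p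
        = ∑ i, (∑ q, ((BT C)ᵀ * BT C)⁻¹ p q * C i q.val) * y i := by
    intro C y p
    simp [pinv, Matrix.mulVec, dotProduct, Matrix.mul_apply, Matrix.transpose_apply,
      Matrix.submatrix_apply, hBT]
  set v : Fin s → ℝ :=
    fun j => if h : j ∈ T₁ then (pinv (BT A)).mulVec x ⟨j, h⟩ else 0 with hvdef
  have hvlim : ∀ j, Filter.Tendsto (fun k => vk k j) Filter.atTop (nhds (v j)) := by
    intro j
    by_cases h : j ∈ T₁
    · have hvj : v j = (pinv (BT A)).mulVec x ⟨j, h⟩ := by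
        rw [hvdef]; simp only [dif_pos h]
      rw [hvj]
      refine Filter.Tendsto.congr (fun k => hform k ⟨j, h⟩) ?_
      rw [hpin A x ⟨j, h⟩]
      have hk : ∀ k, (pinv (BT (Ak k))).mulVec (xk k) ⟨j, h⟩
          = ∑ i, (∑ q, ((BT (Ak k))ᵀ * BT (Ak k))⁻¹ ⟨j, h⟩ q * Ak k i q.val) * xk k i :=
        fun k => hpin (Ak k) (xk k) ⟨j, h⟩
      simp only [hk]
      exact tendsto_finset_sum _ fun i _ =>
        (tendsto_finset_sum _ fun q _ => (hinv_e ⟨j, h⟩ q).mul (hAe i q.val)).mul (hxe i)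
    · have hvj : v j = 0 := by rw [hvdef]; simp only [dif_neg h]
      rw [hvj]
      exact Filter.Tendsto.congr (fun k => (hsupp0 k j h).symm) tendsto_const_nhds
  have hv0 : ∀ j, 0 ≤ v j := fun j => ge_of_tendsto' (hvlim j) fun k => (hIs k).1 j
  have hobj : ∀ w : Fin s → ℝ,
      Filter.Tendsto (fun k => ∑ i, (xk k i - (Matrix.of (Ak k)).mulVec w i) ^ 2)
        Filter.atTop (nhds (∑ i, (x i - (Matrix.of A).mulVec w i) ^ 2)) := by
    intro w
    refine tendsto_finset_sum _ fun i _ => ?_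
    have hmv : Filter.Tendsto (fun k => (Matrix.of (Ak k)).mulVec w i) Filter.atTop
        (nhds ((Matrix.of A).mulVec w i)) := by
      simp only [Matrix.mulVec, dotProduct, Matrix.of_apply]
      exact tendsto_finset_sum _ fun j _ => (hAe i j).mul tendsto_const_nhds
    exact ((hxe i).sub hmv).pow 2
  have hobjv : Filter.Tendsto (fun k => ∑ i, (xk k i - (Matrix.of (Ak k)).mulVec (vk k) i) ^ 2)
      Filter.atTop (nhds (∑ i, (x i - (Matrix.of A).mulVec v i) ^ 2)) := by
    refine tendsto_finset_sum _ fun i _ => ?_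
    have hmv : Filter.Tendsto (fun k => (Matrix.of (Ak k)).mulVec (vk k) i) Filter.atTop
        (nhds ((Matrix.of A).mulVec v i)) := by
      simp only [Matrix.mulVec, dotProduct, Matrix.of_apply]
      exact tendsto_finset_sum _ fun j _ => (hAe i j).mul (hvlim j)
    exact ((hxe i).sub hmv).pow 2
  have hvNN : IsNNLS (Matrix.of A) x v :=
    ⟨hv0, fun w hw => le_of_tendsto_of_tendsto' hobjv (hobj w) fun k => (hIs k).2 w hw⟩
  have hQv : Q A x = v :=
    nnls_unique _ _ (inj_of_rank hArank) (hQ A x hA0 hx0 hArank) hvNN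
  have hsub : T₀ ⊆ T₁ := by
    intro j hj
    rw [hT₀] at hj
    have hpos : 0 < Q A x j := (Finset.mem_filter.mp hj).2
    rw [hQv] at hpos
    by_contra h
    rw [hvdef] at hpos
    simp only [dif_neg h] at hpos
    exact lt_irrefl _ hpos
  refine ⟨hsub.ssubset_of_ne hne, ?_⟩
  intro j hj hj0
  have h1 : Q A x j = 0 := by
    have hnot : ¬0 < Q A x j := fun h => hj0 (by
      rw [hT₀]; exact Finset.mem_filter.mpr ⟨Finset.mem_univ _, h⟩)
    have h2 := (hQ A x hA0 hx0 hArank).1 j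
    linarith [not_lt.mp hnot]
  have h2 : v j = 0 := by rw [← hQv]; exact h1
  rw [hvdef] at h2
  simp only [dif_pos hj] at h2
  exact h2
end
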